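/- Let n ≥ 3 be odd. The odd cycle C_n is not [2,t]-paintable if and only if 2 ≤ t ≤ n. -/

import Mathlib

/- # Preliminaries: the online list-coloring (painting) game -/

namespace PaintGame

open SimpleGraph

/-- `X` is an independent set of vertices of `G`. -/
def IndepOn {V : Type} (G : SimpleGraph V) (X : Finset V) : Prop :=
  ∀ u ∈ X, ∀ w ∈ X, ¬ G.Adj u w

/-- Decrease the remaining mark-capacity of every vertex in the marked set `M` by one. -/
def decMark {V : Type} [DecidableEq V] (f : V → ℕ) (M : Finset V) : V → ℕ :=
  fun v => if v ∈ M then f v - 1 else f v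

theorem decMark_lt {V : Type} [Fintype V] [DecidableEq V] (f : V → ℕ) (M : Finset V)
    (hne : M.Nonempty) (hf : ∀ v ∈ M, 1 ≤ f v) :
    ∑ v, decMark f M v < ∑ v, f v := by
  obtain ⟨v₀, hv₀⟩ := hne
  apply Finset.sum_lt_sum
  · intro i _
    unfold decMark
    split <;> omega
  · refine ⟨v₀, Finset.mem_univ v₀, ?_⟩
    have := hf v₀ hv₀
    simp only [decMark, if_pos hv₀]
    omega

/-- Painter wins the (unbounded) painting game on `G` from the position in which `U` is the
set of uncolored vertices and `f v` is the number of further times `v` may be marked.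
Each round, Lister marks a nonempty set `M` of uncolored vertices, each of which may still
be marked; Painter then colors an independent subset `X` of `M`.  Painter wins when every
vertex is colored; Painter has lost if some uncolored vertex can no longer be marked. -/
def PaintFrom {V : Type} [Fintype V] [DecidableEq V] (G : SimpleGraph V)
    (f : V → ℕ) (U : Finset V) : Prop :=
  U = ∅ ∨ ((∀ v ∈ U, 1 ≤ f v) ∧
    ∀ M : Finset V, M ⊆ U → (hne : M.Nonempty) → (hf : ∀ v ∈ M, 1 ≤ f v) →
      ∃ X : Finset V, X ⊆ M ∧ IndepOn G X ∧ PaintFrom G (decMark f M) (U \ X))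
termination_by ∑ v, f v
decreasing_by exact decMark_lt f M hne hf

/-- `G` is `f`-paintable: Painter can guarantee that every vertex of `G` gets colored
while no vertex `v` is marked more than `f v` times. -/
def Paintable {V : Type} [Fintype V] [DecidableEq V] (G : SimpleGraph V) (f : V → ℕ) : Prop :=
  PaintFrom G f Finset.univ

/-- Painter wins the painting game on `G` lasting exactly `t` further rounds, where `U`
is the set of uncolored vertices and each vertex `v` must be marked in exactly `f v` of the
remaining rounds.  Each round Lister marks a nonempty set `M` of vertices that can still be
marked (colored vertices may be marked, since the marked sets are the color classes of a
fixed list assignment using exactly `t` colors); Painter colors an independent set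
`X ⊆ M` of uncolored vertices.  At the end, Painter wins if every vertex got colored, or by
default if Lister failed to mark every vertex `v` exactly `f v` times. -/
def PaintFromIn {V : Type} [DecidableEq V] (G : SimpleGraph V) :
    ℕ → (V → ℕ) → Finset V → Prop
  | 0, f, U => U = ∅ ∨ ∃ v, f v ≠ 0
  | (t + 1), f, U =>
      ∀ M : Finset V, M.Nonempty → (∀ v ∈ M, 1 ≤ f v) →
        ∃ X : Finset V, X ⊆ M ∩ U ∧ IndepOn G X ∧
          PaintFromIn G t (decMark f M) (U \ X)

/-- `G` is `[f,t]`-paintable: Painter can guarantee that every vertex gets colored in the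
painting game on `G` lasting exactly `t` rounds, in which Lister must mark each vertex `v`
in exactly `f v` of the `t` (nonempty) marked sets. -/
def PaintableIn {V : Type} [Fintype V] [DecidableEq V]
    (G : SimpleGraph V) (f : V → ℕ) (t : ℕ) : Prop :=
  PaintFromIn G t f Finset.univ

/-- `m(G,f)`: the minimum `t ≥ max {f v : v ∈ V(G)}` for which `G` is not
`[f,t]`-paintable. -/
noncomputable def mval {V : Type} [Fintype V] [DecidableEq V]
    (G : SimpleGraph V) (f : V → ℕ) : ℕ :=
  sInf {t | (∀ v, f v ≤ t) ∧ ¬ PaintableIn G f t}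

/-- `M(G,f)`: the maximum `t` for which `G` is not `[f,t]`-paintable. -/
noncomputable def Mval {V : Type} [Fintype V] [DecidableEq V]
    (G : SimpleGraph V) (f : V → ℕ) : ℕ :=
  sSup {t | ¬ PaintableIn G f t}

/-- `ListerForce G f U c`: in the painting game on `G` (uncolored set `U`, each vertex `v`
markable at most `f v` more times), Lister can force the appearance of an uncolorable vertex
(an uncolored vertex that can no longer be marked) while spending at most `c` in total,
where a round with marked set `M` costs `|M| - 1`. -/
def ListerForce {V : Type} [Fintype V] [DecidableEq V] (G : SimpleGraph V)
    (f : V → ℕ) (U : Finset V) (c : ℕ) : Prop :=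
  (∃ v ∈ U, f v = 0) ∨
    ∃ M : Finset V, M ⊆ U ∧ ∃ hne : M.Nonempty, ∃ hf : ∀ v ∈ M, 1 ≤ f v,
      ∃ c', M.card - 1 + c' ≤ c ∧
        ∀ X : Finset V, X ⊆ M → IndepOn G X →
          ListerForce G (decMark f M) (U \ X) c'
termination_by ∑ v, f v
decreasing_by exact decMark_lt f M hne hf

/-- `q(G,f)`: the minimum total cost `Σᵢ (|Vᵢ| - 1)` that Lister can guarantee while
forcing an uncolorable vertex, over plays in which each vertex `v` is marked at most
`f v` times. -/
noncomputable def qval {V : Type} [Fintype V] [DecidableEq V]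
    (G : SimpleGraph V) (f : V → ℕ) : ℕ :=
  sInf {c | ListerForce G f Finset.univ c}

/- # Graph containments -/

/-- `G` contains an odd cycle. -/
def HasOddCycle {V : Type} (G : SimpleGraph V) : Prop :=
  ∃ (v : V) (c : G.Walk v v), c.IsCycle ∧ Odd c.length

/-- `G` contains a triangle `C₃`. -/
def HasTriangle {V : Type} (G : SimpleGraph V) : Prop :=
  ∃ u v w : V, G.Adj u v ∧ G.Adj v w ∧ G.Adj u w

/-- `G` contains the theta graph `θ_{p,q,r}`: two vertices joined by three internally
disjoint paths with `p`, `q` and `r` edges respectively. -/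
def HasTheta {V : Type} (G : SimpleGraph V) (p q r : ℕ) : Prop :=
  ∃ (u v : V) (P Q R : G.Walk u v),
    P.IsPath ∧ Q.IsPath ∧ R.IsPath ∧
    P.length = p ∧ Q.length = q ∧ R.length = r ∧
    (∀ x, x ∈ P.support → x ∈ Q.support → x = u ∨ x = v) ∧
    (∀ x, x ∈ P.support → x ∈ R.support → x = u ∨ x = v) ∧
    (∀ x, x ∈ Q.support → x ∈ R.support → x = u ∨ x = v)

/-- `G` contains a graph of the form `C_m·P_k·C_n`: two cycles joined by a path, the
cycles being vertex disjoint, except that when the path is trivial (`k = 1`) the two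
cycles share exactly one vertex. -/
def HasDumbbell {V : Type} (G : SimpleGraph V) : Prop :=
  ∃ (a b : V) (c : G.Walk a a) (d : G.Walk b b) (W : G.Walk a b),
    c.IsCycle ∧ d.IsCycle ∧ W.IsPath ∧
    (∀ x, x ∈ c.support → x ∈ d.support → x = a ∧ x = b) ∧
    (∀ x, x ∈ W.support → x ∈ c.support → x = a) ∧
    (∀ x, x ∈ W.support → x ∈ d.support → x = b)

/-- `G` contains a copy of `H` as a (not necessarily induced) subgraph. -/
def ContainsCopy {W V : Type} (H : SimpleGraph W) (G : SimpleGraph V) : Prop :=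
  ∃ φ : H →g G, Function.Injective φ

/-- `G` contains a member of the family `𝔉₃`: some `θ_{p,q,r}` that is not isomorphic to
any `θ_{2,2,2k}`. -/
def ContainsF3 {V : Type} (G : SimpleGraph V) : Prop :=
  ∃ p q r : ℕ, HasTheta G p q r ∧ ∀ k : ℕ, ({p, q, r} : Multiset ℕ) ≠ {2, 2, 2 * k}

/-- `G` contains a member of the family `𝔉₄ = {θ_{2,2,2k} : k ≥ 2}`. -/
def ContainsF4 {V : Type} (G : SimpleGraph V) : Prop :=
  ∃ k : ℕ, 2 ≤ k ∧ HasTheta G 2 2 (2 * k)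

/- # The core of a graph -/

open Classical in
/-- Delete from `S` all vertices having exactly one neighbour (in `G`) inside `S`. -/
noncomputable def coreStep {V : Type} [DecidableEq V] (G : SimpleGraph V)
    (S : Finset V) : Finset V :=
  S.filter fun v => ¬ ((S.filter fun w => G.Adj v w).card = 1)

/-- The vertex set of the core of `G`: iteratively delete all vertices of degree 1. -/
noncomputable def coreSet {V : Type} [Fintype V] [DecidableEq V] (G : SimpleGraph V) :
    Finset V :=
  (coreStep G)^[Fintype.card V] Finset.univ

/-- The core of `G`: the subgraph of `G` obtained by the iterated removal of all
vertices of degree 1. -/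
noncomputable def coreGraph {V : Type} [Fintype V] [DecidableEq V] (G : SimpleGraph V) :
    SimpleGraph ↥((coreSet G : Set V)) :=
  G.induce (coreSet G : Set V)

end PaintGame

open SimpleGraph PaintGame
namespace PaintGame

variable {V : Type} [Fintype V] [DecidableEq V] (G : SimpleGraph V)

/-- If the total number of remaining marks is smaller than the number of remaining rounds,
Painter wins by default. -/
theorem paintFromIn_of_lt (s : ℕ) : ∀ (g : V → ℕ) (U : Finset V),
    (∑ v, g v) < s → PaintFromIn G s g U := by
  induction s with
  | zero => intro g U h; omega
  | succ s ih =>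
    intro g U h
    intro M hne hf
    refine ⟨∅, by simp, by simp [IndepOn], ?_⟩
    apply ih
    have h2 := decMark_lt g M hne hf
    omega

/-- If every uncolored vertex can still be marked and the total number of remaining marks
is at most the number of remaining rounds, Painter wins: he colors the vertex of every
singleton round, and wins by default as soon as Lister plays a non-singleton round. -/
theorem paintFromIn_of_le (s : ℕ) : ∀ (g : V → ℕ) (U : Finset V),
    (∀ v ∈ U, 1 ≤ g v) → (∑ v, g v) ≤ s → PaintFromIn G s g U := by
  induction s with
  | zero =>
    intro g U hU h
    left
    by_contra hne
    obtain ⟨v, hv⟩ := Finset.nonempty_iff_ne_empty.2 hne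
    have h1 := hU v hv
    have h2 : g v ≤ ∑ x, g x := Finset.single_le_sum (fun i _ => Nat.zero_le _) (Finset.mem_univ v)
    omega
  | succ s ih =>
    intro g U hU h
    intro M hne hf
    by_cases hcard : M.card = 1
    · obtain ⟨a, ha⟩ := Finset.card_eq_one.1 hcard
      subst ha
      refine ⟨{a} ∩ U, Finset.Subset.refl _, ?_, ?_⟩
      · intro u hu w hw
        simp only [Finset.mem_inter, Finset.mem_singleton] at hu hw
        rw [hu.1, hw.1]
        simp
      · apply ih
        · intro v hv
          simp only [Finset.mem_sdiff, Finset.mem_inter, Finset.mem_singleton, not_and] at hv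
          have hva : v ≠ a := fun hh => (hv.2 hh) hv.1
          have := hU v hv.1
          simp [decMark, hva]
          omega
        · have : ∑ v, decMark g {a} v < ∑ v, g v :=
            decMark_lt g {a} (Finset.singleton_nonempty a) hf
          omega
    · have hcard2 : 2 ≤ M.card := by
        have := Finset.card_pos.2 hne
        omega
      refine ⟨∅, by simp, by simp [IndepOn], ?_⟩
      apply paintFromIn_of_lt
      have : ∑ v ∈ M, decMark g M v + M.card ≤ ∑ v ∈ M, g v := by
        have hc : M.card = ∑ _v ∈ M, 1 := by simp
        rw [hc, ← Finset.sum_add_distrib]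
        apply Finset.sum_le_sum
        intro i hi
        have := hf i hi
        simp [decMark, hi]
        omega
      have hsplit : ∑ v, decMark g M v = ∑ v ∈ M, decMark g M v + ∑ v ∈ Mᶜ, decMark g M v :=
        (Finset.sum_add_sum_compl M _).symm
      have hsplit2 : ∑ v, g v = ∑ v ∈ M, g v + ∑ v ∈ Mᶜ, g v :=
        (Finset.sum_add_sum_compl M _).symm
      have heq : ∑ v ∈ Mᶜ, decMark g M v = ∑ v ∈ Mᶜ, g v := by
        apply Finset.sum_congr rfl
        intro i hi
        simp only [Finset.mem_compl] at hi
        simp [decMark, hi]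
      omega
/-- `PaintFrom` only depends on the restriction of the token function to uncolored
vertices. -/
theorem paintFrom_congr (N : ℕ) : ∀ (g g' : V → ℕ) (U : Finset V),
    (∑ v, g' v) ≤ N → (∀ v ∈ U, g v = g' v) → PaintFrom G g U → PaintFrom G g' U := by
  induction N with
  | zero =>
    intro g g' U hN hagree h
    rw [PaintFrom] at h ⊢
    rcases h with h | h
    · exact Or.inl h
    · rcases Finset.eq_empty_or_nonempty U with hU | ⟨v, hv⟩
      · exact Or.inl hU
      · exfalso
        have h1 := h.1 v hv
        rw [hagree v hv] at h1
        have h2 : g' v ≤ ∑ x, g' x :=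
          Finset.single_le_sum (fun i _ => Nat.zero_le _) (Finset.mem_univ v)
        omega
  | succ N ih =>
    intro g g' U hN hagree h
    rw [PaintFrom] at h ⊢
    rcases h with h | h
    · exact Or.inl h
    · right
      refine ⟨fun v hv => (hagree v hv) ▸ h.1 v hv, ?_⟩
      intro M hMU hne hf'
      have hf : ∀ v ∈ M, 1 ≤ g v := fun v hv => by
        rw [hagree v (hMU hv)]; exact hf' v hv
      obtain ⟨X, hXM, hind, hrec⟩ := h.2 M hMU hne hf
      refine ⟨X, hXM, hind, ?_⟩
      apply ih (decMark g M) (decMark g' M) (U \ X)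
      · have := decMark_lt g' M hne hf'
        omega
      · intro v hv
        have hvU : v ∈ U := (Finset.mem_sdiff.1 hv).1
        simp only [decMark]
        rw [hagree v hvU]
      · exact hrec

/-- If Painter wins the unbounded game from a position, he wins the `s`-round game from
that position for every `s`. -/
theorem paintFromIn_of_paintFrom (s : ℕ) : ∀ (g : V → ℕ) (U : Finset V),
    PaintFrom G g U → PaintFromIn G s g U := by
  induction s with
  | zero =>
    intro g U h
    rcases Finset.eq_empty_or_nonempty U with hU | ⟨v, hv⟩
    · exact Or.inl hU
    · rw [PaintFrom] at h
      rcases h with h | h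
      · exact Or.inl h
      · exact Or.inr ⟨v, by have := h.1 v hv; omega⟩
  | succ s ih =>
    intro g U h
    intro M hne hf
    by_cases hM' : M ∩ U = ∅
    · refine ⟨∅, by simp, by simp [IndepOn], ?_⟩
      rw [Finset.sdiff_empty]
      apply ih
      apply paintFrom_congr G (∑ v, decMark g M v) g (decMark g M) U le_rfl _ h
      intro v hv
      have hvM : v ∉ M := fun hvM => by
        rw [Finset.eq_empty_iff_forall_notMem] at hM'
        exact hM' v (Finset.mem_inter.2 ⟨hvM, hv⟩)
      simp [decMark, hvM]
    · have hne' : (M ∩ U).Nonempty := Finset.nonempty_iff_ne_empty.2 hM'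
      rw [PaintFrom] at h
      rcases h with h | h
      · exfalso
        obtain ⟨v, hv⟩ := hne'
        rw [h] at hv
        simp at hv
      · obtain ⟨X, hXM, hind, hrec⟩ := h.2 (M ∩ U) Finset.inter_subset_right hne'
          (fun v hv => hf v (Finset.mem_inter.1 hv).1)
        refine ⟨X, hXM, hind, ?_⟩
        apply ih
        apply paintFrom_congr G (∑ v, decMark g M v) (decMark g (M ∩ U)) (decMark g M)
          (U \ X) le_rfl _ hrec
        intro v hv
        have hvU : v ∈ U := (Finset.mem_sdiff.1 hv).1
        simp only [decMark, Finset.mem_inter]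
        by_cases hvM : v ∈ M <;> simp [hvM, hvU]
open scoped Classical

/-- Greedy choice of an independent subset of `M` such that every skipped vertex of `M`
has an earlier (w.r.t. an injective layout `ι`) neighbour in the chosen set. -/
theorem exists_greedy (ι : V → ℕ) (hι : Function.Injective ι) :
    ∀ (M : Finset V), M.Nonempty →
    ∃ X : Finset V, X ⊆ M ∧ IndepOn G X ∧
      ∀ w ∈ M, w ∉ X → ∃ x ∈ X, G.Adj w x ∧ ι x < ι w := by
  intro M
  induction M using Finset.strongInduction with
  | _ M ihM =>
    intro hne
    obtain ⟨a, haM, hamin⟩ := Finset.exists_min_image M ι hne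
    set M' := M.filter (fun w => ¬ G.Adj a w ∧ w ≠ a) with hM'
    have hM'ss : M' ⊆ M := Finset.filter_subset _ _
    have haM' : a ∉ M' := by simp [hM']
    have hM'lt : M' ⊂ M := Finset.ssubset_iff_of_subset hM'ss |>.2 ⟨a, haM, haM'⟩
    have hskip : ∀ w ∈ M, w ∉ M' → w ≠ a → G.Adj a w := by
      intro w hw hw' hwa
      by_contra hadj
      exact hw' (Finset.mem_filter.2 ⟨hw, hadj, hwa⟩)
    rcases Finset.eq_empty_or_nonempty M' with hM'e | hM'ne
    · refine ⟨{a}, Finset.singleton_subset_iff.2 haM, ?_, ?_⟩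
      · intro u hu w hw
        simp only [Finset.mem_singleton] at hu hw
        rw [hu, hw]; simp
      · intro w hw hwX
        simp only [Finset.mem_singleton] at hwX
        have hadj : G.Adj a w := hskip w hw (by rw [hM'e]; simp) hwX
        refine ⟨a, Finset.mem_singleton_self a, hadj.symm, ?_⟩
        have := hamin w hw
        have : ι a ≠ ι w := fun h => hwX (hι h).symm
        omega
    · obtain ⟨X', hX'M', hind', hprop'⟩ := ihM M' hM'lt hM'ne
      refine ⟨insert a X', ?_, ?_, ?_⟩
      · intro x hx
        rcases Finset.mem_insert.1 hx with hx | hx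
        · rw [hx]; exact haM
        · exact hM'ss (hX'M' hx)
      · intro u hu w hw
        rcases Finset.mem_insert.1 hu with hu | hu <;>
          rcases Finset.mem_insert.1 hw with hw | hw
        · rw [hu, hw]; simp
        · rw [hu]; exact (Finset.mem_filter.1 (hX'M' hw)).2.1
        · rw [hw]
          intro hadj
          exact (Finset.mem_filter.1 (hX'M' hu)).2.1 hadj.symm
        · exact hind' u hu w hw
      · intro w hw hwX
        have hwa : w ≠ a := fun h => hwX (h ▸ Finset.mem_insert_self a X')
        have hwX' : w ∉ X' := fun h => hwX (Finset.mem_insert_of_mem h)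
        by_cases hwM' : w ∈ M'
        · obtain ⟨x, hx, hadj, hlt⟩ := hprop' w hwM' hwX'
          exact ⟨x, Finset.mem_insert_of_mem hx, hadj, hlt⟩
        · have hadj : G.Adj a w := hskip w hw hwM' hwa
          refine ⟨a, Finset.mem_insert_self a X', hadj.symm, ?_⟩
          have := hamin w hw
          have : ι a ≠ ι w := fun h => hwa (hι h).symm
          omega

/-- Degeneracy-type criterion: if there is an injective layout `ι` such that every
uncolored vertex `v` has more tokens than uncolored neighbours earlier in the layout,
then Painter wins the unbounded game. -/
theorem paintFrom_of_order (ι : V → ℕ) (hι : Function.Injective ι) (N : ℕ) :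
    ∀ (g : V → ℕ) (U : Finset V), (∑ v, g v) ≤ N →
    (∀ v ∈ U, (U.filter (fun w => G.Adj v w ∧ ι w < ι v)).card + 1 ≤ g v) →
    PaintFrom G g U := by
  induction N with
  | zero =>
    intro g U hN hdeg
    rw [PaintFrom]
    rcases Finset.eq_empty_or_nonempty U with hU | ⟨v, hv⟩
    · exact Or.inl hU
    · exfalso
      have h1 := hdeg v hv
      have h2 : g v ≤ ∑ x, g x :=
        Finset.single_le_sum (fun i _ => Nat.zero_le _) (Finset.mem_univ v)
      omega
  | succ N ih =>
    intro g U hN hdeg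
    rw [PaintFrom]
    rcases Finset.eq_empty_or_nonempty U with hU | hUne
    · exact Or.inl hU
    · right
      refine ⟨fun v hv => by have := hdeg v hv; omega, ?_⟩
      intro M hMU hne hf
      obtain ⟨X, hXM, hind, hprop⟩ := exists_greedy G ι hι M hne
      refine ⟨X, hXM, hind, ?_⟩
      apply ih
      · have := decMark_lt g M hne hf
        omega
      · intro v hv
        obtain ⟨hvU, hvX⟩ := Finset.mem_sdiff.1 hv
        have hsub : ((U \ X).filter (fun w => G.Adj v w ∧ ι w < ι v)) ⊆
            (U.filter (fun w => G.Adj v w ∧ ι w < ι v)) := by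
          intro y hy
          simp only [Finset.mem_filter, Finset.mem_sdiff] at hy ⊢
          exact ⟨hy.1.1, hy.2⟩
        by_cases hvM : v ∈ M
        · obtain ⟨x, hxX, hadj, hlt⟩ := hprop v hvM hvX
          have hxU : x ∈ U := hMU (hXM hxX)
          have hxold : x ∈ U.filter (fun w => G.Adj v w ∧ ι w < ι v) :=
            Finset.mem_filter.2 ⟨hxU, hadj, hlt⟩
          have hxnew : x ∉ U \ X := fun h => (Finset.mem_sdiff.1 h).2 hxX
          have hsub' : ((U \ X).filter (fun w => G.Adj v w ∧ ι w < ι v)) ⊆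
              (U.filter (fun w => G.Adj v w ∧ ι w < ι v)).erase x := by
            intro y hy
            refine Finset.mem_erase.2 ⟨?_, hsub hy⟩
            intro hyx
            exact hxnew (hyx ▸ (Finset.mem_filter.1 hy).1)
          have hcard := Finset.card_le_card hsub'
          have hcard2 := Finset.card_erase_le (s := U.filter (fun w => G.Adj v w ∧ ι w < ι v)) (a := x)
          have hcard3 : 1 ≤ (U.filter (fun w => G.Adj v w ∧ ι w < ι v)).card :=
            Finset.card_pos.2 ⟨x, hxold⟩
          have hcarde : ((U.filter (fun w => G.Adj v w ∧ ι w < ι v)).erase x).card =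
              (U.filter (fun w => G.Adj v w ∧ ι w < ι v)).card - 1 :=
            Finset.card_erase_of_mem hxold
          have hdv := hdeg v hvU
          simp only [decMark, hvM, if_pos]
          omega
        · have hdv := hdeg v hvU
          have hcard := Finset.card_le_card hsub
          simp only [decMark, hvM, if_neg, ite_false]
          omega
/-- Lister endgame: marking the leftover (once-markable) vertices one at a time. -/
theorem lister_tail : ∀ (l : List V), l.Nodup → ∀ (g : V → ℕ) (U : Finset V) (v : V),
    v ∈ U → v ∉ l → (∀ x, g x = if x ∈ l then 1 else 0) →
    ¬ PaintFromIn G l.length g U := by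
  intro l
  induction l with
  | nil =>
    intro _ g U v hvU hvl hg h
    rcases h with h | ⟨x, hx⟩
    · rw [h] at hvU; simp at hvU
    · rw [hg x] at hx; simp at hx
  | cons a l' ih =>
    intro hnd g U v hvU hvl hg h
    have hal' : a ∉ l' := (List.nodup_cons.1 hnd).1
    obtain ⟨X, hXsub, hXind, hnext⟩ := h {a} (Finset.singleton_nonempty a)
      (fun x hx => by
        simp only [Finset.mem_singleton] at hx
        rw [hx, hg a]; simp)
    refine ih (List.nodup_cons.1 hnd).2 (decMark g {a}) (U \ X) v ?_ ?_ ?_ hnext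
    · refine Finset.mem_sdiff.2 ⟨hvU, fun hvX => ?_⟩
      have := hXsub hvX
      simp only [Finset.mem_inter, Finset.mem_singleton] at this
      exact hvl (this.1 ▸ List.mem_cons_self (a := a) (l := l'))
    · exact fun hh => hvl (List.mem_cons_of_mem a hh)
    · intro x
      by_cases hxa : x = a
      · subst hxa
        simp [decMark, hg x, hal']
      · simp [decMark, hxa, hg x, List.mem_cons]

open scoped Classical

section Cycle

variable {n : ℕ}
open Fin.NatCast Fin.CommRing

theorem cyc_adj [NeZero n] (hn : 3 ≤ n) {u v : Fin n} :
    (cycleGraph n).Adj u v ↔ u - v = 1 ∨ v - u = 1 := by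
  obtain ⟨m, rfl⟩ : ∃ m, n = m + 2 := ⟨n - 2, by omega⟩
  exact cycleGraph_adj

theorem cyc_adj_succ [NeZero n] (hn : 3 ≤ n) (u : Fin n) : (cycleGraph n).Adj u (u + 1) := by
  rw [cyc_adj hn]
  right
  rw [add_sub_cancel_left]

/-- In an odd cycle, the complement of an independent set contains an edge. -/
theorem exists_adj_pair [NeZero n] (hn : 3 ≤ n) (hodd : Odd n) (X : Finset (Fin n))
    (hX : IndepOn (cycleGraph n) X) : ∃ u : Fin n, u ∉ X ∧ u + 1 ∉ X := by
  by_contra hcon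
  push_neg at hcon
  set b : ℕ → Bool := fun k => decide ((k : Fin n) ∈ X) with hb
  have hstep : ∀ k : ℕ, b (k + 1) = ! b k := by
    intro k
    have hcast : ((k + 1 : ℕ) : Fin n) = (k : Fin n) + 1 := by push_cast; ring
    by_cases hmem : (k : Fin n) ∈ X
    · have h1 : (k : Fin n) + 1 ∉ X := fun h1 =>
        hX _ hmem _ h1 (cyc_adj_succ hn _)
      simp [hb, hcast, hmem, h1]
    · have h1 := hcon _ hmem
      simp [hb, hcast, hmem, h1]
  have heven : ∀ k : ℕ, b (2 * k) = b 0 := by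
    intro k
    induction k with
    | zero => rfl
    | succ k ihk =>
      have : 2 * (k + 1) = (2 * k + 1) + 1 := by ring
      rw [this, hstep, hstep, Bool.not_not, ihk]
  obtain ⟨m, hm⟩ := hodd
  have h1 : b n = ! b 0 := by rw [hm, hstep, heven]
  have h2 : b n = b 0 := by
    have : ((n : ℕ) : Fin n) = ((0 : ℕ) : Fin n) := by
      simp [Fin.natCast_self]
    simp only [hb, this]
  rw [h2] at h1
  exact (Bool.eq_not_self (b 0)).1 h1

theorem val_add_one_of_ne [NeZero n] (hn : 3 ≤ n) (b : Fin n) (h : b + 1 ≠ 0) :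
    (b + 1).val = b.val + 1 := by
  haveI : NeZero n := ⟨by omega⟩
  have h1 : (1 : Fin n).val = 1 := by rw [Fin.val_one']; exact Nat.mod_eq_of_lt (by omega)
  have hadd : (b + 1).val = (b.val + 1) % n := by rw [Fin.add_def, h1]
  rcases Nat.lt_or_ge (b.val + 1) n with hlt | hge
  · rw [hadd, Nat.mod_eq_of_lt hlt]
  · exfalso
    have hb := b.isLt
    have hbn : b.val + 1 = n := by omega
    apply h
    apply Fin.ext
    rw [hadd, hbn, Nat.mod_self]
    simp

/-- Painter's structural response on the cycle when the first marked set is proper: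
an independent subset of `M` whose removal leaves a well-ordered (degenerate) position. -/
theorem round1 (hn : 3 ≤ n) (M : Finset (Fin n)) (hMne : M.Nonempty)
    (hMuniv : M ≠ Finset.univ) :
    ∃ X : Finset (Fin n), X ⊆ M ∧ IndepOn (cycleGraph n) X ∧
      PaintFrom (cycleGraph n) (decMark (fun _ => 2) M) (Finset.univ \ X) := by
  haveI : NeZero n := ⟨by omega⟩
  obtain ⟨m, hm⟩ := hMne
  obtain ⟨w, hw⟩ : ∃ w, w ∉ M := by
    by_contra hcon
    push_neg at hcon
    exact hMuniv (Finset.eq_univ_iff_forall.2 hcon)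
  have hex : ∀ v : Fin n, ∃ k : ℕ, v - (k : Fin n) ∉ M := fun v =>
    ⟨(v - w).val, by rw [Fin.cast_val_eq_self, sub_sub_cancel]; exact hw⟩
  set d : Fin n → ℕ := fun v => Nat.find (hex v) with hd
  have dspec : ∀ v, v - ((d v : ℕ) : Fin n) ∉ M := fun v => Nat.find_spec (hex v)
  have dmin : ∀ v, ∀ j < d v, v - ((j : ℕ) : Fin n) ∈ M := by
    intro v j hj
    have := Nat.find_min (hex v) hj
    simpa using this
  have dpos : ∀ v ∈ M, 1 ≤ d v := by
    intro v hv
    by_contra hcon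
    have h0 : d v = 0 := by omega
    have := dspec v
    rw [h0] at this
    simp at this
    exact this hv
  have dsucc : ∀ v : Fin n, v + 1 ∈ M → d (v + 1) = d v + 1 := by
    intro v hv1
    show Nat.find (hex (v + 1)) = d v + 1
    rw [Nat.find_eq_iff]
    constructor
    · have hc : ((d v + 1 : ℕ) : Fin n) = ((d v : ℕ) : Fin n) + 1 := by push_cast; ring
      rw [hc]
      have hc2 : v + 1 - (((d v : ℕ) : Fin n) + 1) = v - ((d v : ℕ) : Fin n) := by ring
      rw [hc2]
      exact dspec v
    · intro k hk
      simp only [not_not]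
      cases k with
      | zero => simpa using hv1
      | succ j =>
        have hc : ((j + 1 : ℕ) : Fin n) = ((j : ℕ) : Fin n) + 1 := by push_cast; ring
        rw [hc]
        have hc2 : v + 1 - (((j : ℕ) : Fin n) + 1) = v - ((j : ℕ) : Fin n) := by ring
        rw [hc2]
        exact dmin v j (by omega)
  set X : Finset (Fin n) := M.filter (fun v => d v % 2 = 1) with hX
  have hmemX : ∀ v, v ∈ X ↔ v ∈ M ∧ d v % 2 = 1 := by
    intro v; rw [hX, Finset.mem_filter]
  have hXsub : X ⊆ M := Finset.filter_subset _ _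
  have hind : IndepOn (cycleGraph n) X := by
    intro u hu z hz hadj
    rw [cyc_adj hn] at hadj
    have key : ∀ p q : Fin n, p ∈ X → q ∈ X → q - p = 1 → False := by
      intro p q hp hq hpq
      have hqp : q = p + 1 := by
        rw [sub_eq_iff_eq_add] at hpq
        rw [hpq]; ring
      have := dsucc p (hqp ▸ (hmemX q).1 hq |>.1)
      have h1 := ((hmemX p).1 hp).2
      have h2 := ((hmemX q).1 hq).2
      rw [hqp] at h2
      omega
    rcases hadj with hadj | hadj
    · exact key z u hz hu hadj
    · exact key u z hu hz hadj
  -- the anchor: a run-starting vertex, which is colored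
  set a : Fin n := m - ((d m - 1 : ℕ) : Fin n) with ha
  have haM : a ∈ M := dmin m (d m - 1) (by have := dpos m hm; omega)
  have hda : d a = 1 := by
    show Nat.find (hex a) = 1
    rw [Nat.find_eq_iff]
    constructor
    · rw [ha]
      have hc : ((1 : ℕ) : Fin n) = (1 : Fin n) := by push_cast; ring
      rw [hc]
      have hc2 : m - ((d m - 1 : ℕ) : Fin n) - 1 = m - (((d m - 1 : ℕ) : Fin n) + 1) := by ring
      rw [hc2]
      have hc3 : ((d m - 1 : ℕ) : Fin n) + 1 = ((d m : ℕ) : Fin n) := by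
        rw [← Nat.cast_add_one, Nat.sub_add_cancel (dpos m hm)]
      rw [hc3]
      exact dspec m
    · intro k hk
      have hk0 : k = 0 := by omega
      subst hk0
      simp only [not_not, Nat.cast_zero, sub_zero]
      exact haM
  have haX : a ∈ X := (hmemX a).2 ⟨haM, by rw [hda]⟩
  have hprev : ∀ v ∈ M, v ∉ X → v - 1 ∈ X := by
    intro v hv hvX
    have hnodd : ¬ (d v % 2 = 1) := fun h => hvX ((hmemX v).2 ⟨hv, h⟩)
    have h2 : 2 ≤ d v := by have := dpos v hv; omega
    have hv1 : v - 1 ∈ M := by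
      have := dmin v 1 (by omega)
      simpa using this
    have hs : d ((v - 1) + 1) = d (v - 1) + 1 := by
      apply dsucc
      rw [sub_add_cancel]
      exact hv
    rw [sub_add_cancel] at hs
    exact (hmemX (v - 1)).2 ⟨hv1, by omega⟩
  refine ⟨X, hXsub, hind, ?_⟩
  set ι : Fin n → ℕ := fun v => (v - a).val with hι
  have hιinj : Function.Injective ι := by
    intro x y hxy
    rw [hι] at hxy
    have : x - a = y - a := Fin.val_injective hxy
    exact sub_left_injective this
  refine paintFrom_of_order (cycleGraph n) ι hιinj
    (∑ v : Fin n, decMark (fun _ => 2) M v) _ _ le_rfl ?_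
  intro v hv
  rw [Finset.filter_congr_decidable]
  have hvX : v ∉ X := (Finset.mem_sdiff.1 hv).2
  have hsub : ((Finset.univ \ X).filter (fun u => (cycleGraph n).Adj v u ∧ ι u < ι v)) ⊆
      ({v - 1} : Finset (Fin n)) := by
    intro u hu
    rw [Finset.mem_filter] at hu
    obtain ⟨huU, hadj, hlt⟩ := hu
    have huX : u ∉ X := (Finset.mem_sdiff.1 huU).2
    rw [cyc_adj hn] at hadj
    rcases hadj with hadj | hadj
    · -- v - u = 1, i.e. u = v - 1
      rw [Finset.mem_singleton]
      rw [sub_eq_iff_eq_add] at hadj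
      rw [hadj]; ring
    · -- u - v = 1, i.e. u = v + 1 : impossible since ι u > ι v
      exfalso
      have huv : u = v + 1 := by
        rw [sub_eq_iff_eq_add] at hadj
        rw [hadj]; ring
      have hune : u ≠ a := fun h => huX (h ▸ haX)
      have hne0 : v - a + 1 ≠ 0 := by
        intro h0
        apply hune
        rw [huv]
        have h2 : v + 1 - a = 0 := by rw [← h0]; ring
        exact sub_eq_zero.1 h2
      have hc : u - a = (v - a) + 1 := by rw [huv]; ring
      have hlt' : ((u - a : Fin n)).val < ((v - a : Fin n)).val := hlt
      rw [hc, val_add_one_of_ne hn (v - a) hne0] at hlt'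
      omega
  have hcard : ((Finset.univ \ X).filter
      (fun u => (cycleGraph n).Adj v u ∧ ι u < ι v)).card ≤ 1 :=
    le_trans (Finset.card_le_card hsub) (by simp)
  by_cases hvM : v ∈ M
  · have hvprev := hprev v hvM hvX
    have hempty : ((Finset.univ \ X).filter
        (fun u => (cycleGraph n).Adj v u ∧ ι u < ι v)) = ∅ := by
      rw [Finset.eq_empty_iff_forall_notMem]
      intro u hu
      have h1 := hsub hu
      rw [Finset.mem_singleton] at h1
      have huU := (Finset.mem_filter.1 hu).1
      exact (Finset.mem_sdiff.1 huU).2 (h1 ▸ hvprev)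
    rw [hempty]
    simp [decMark, hvM]
  · have hdm : decMark (fun _ => 2) M v = 2 := by simp [decMark, hvM]
    omega

end Cycle
end PaintGame

open SimpleGraph PaintGame

/-- Theorem `cycleTh`.  Let `n ≥ 3` be odd.  The odd cycle `C_n` is not
`[2,t]`-paintable if and only if `2 ≤ t ≤ n`. -/
theorem oddCycle_not_paintableIn_iff (n : ℕ) (hn : 3 ≤ n) (hodd : Odd n) (t : ℕ) :
    ¬ PaintGame.PaintableIn (SimpleGraph.cycleGraph n) (fun _ => 2) t ↔ 2 ≤ t ∧ t ≤ n := by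
  haveI : NeZero n := ⟨by omega⟩
  have v0 : Fin n := ⟨0, by omega⟩
  have hpaint : ¬(2 ≤ t ∧ t ≤ n) → PaintableIn (cycleGraph n) (fun _ => 2) t := by
    intro hc
    have hcase : t ≤ 1 ∨ n + 1 ≤ t := by omega
    rcases hcase with ht | ht
    · match t, ht with
      | 0, _ =>
        exact Or.inr ⟨⟨0, by omega⟩, by norm_num⟩
      | 1, _ =>
        intro M hne hf
        refine ⟨∅, by simp, by simp [IndepOn], ?_⟩
        refine Or.inr ⟨⟨0, by omega⟩, ?_⟩
        by_cases h0 : (0 : Fin n) ∈ M <;> simp [decMark, h0]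
    · obtain ⟨s, rfl⟩ : ∃ s, t = s + 1 := ⟨t - 1, by omega⟩
      intro M hne hf
      by_cases hMu : M = Finset.univ
      · subst hMu
        refine ⟨∅, by simp, by simp [IndepOn], ?_⟩
        rw [Finset.sdiff_empty]
        apply paintFromIn_of_le
        · intro v _; simp [decMark]
        · have hone : ∀ v : Fin n, decMark (fun _ => 2) Finset.univ v = 1 := fun v => by
            simp [decMark]
          rw [Finset.sum_congr rfl (fun v _ => hone v)]
          simp only [Finset.sum_const, Finset.card_univ, Fintype.card_fin, smul_eq_mul,
            mul_one]
          omega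
      · obtain ⟨X, hXsub, hXind, hXpf⟩ := round1 hn M hne hMu
        refine ⟨X, Finset.subset_inter hXsub (Finset.subset_univ X), hXind, ?_⟩
        exact paintFromIn_of_paintFrom _ s _ _ hXpf
  have hlister : 2 ≤ t → t ≤ n → ¬ PaintableIn (cycleGraph n) (fun _ => 2) t := by
    intro h2 hn' h
    obtain ⟨k, rfl⟩ : ∃ k, t = k + 2 := ⟨t - 2, by omega⟩
    obtain ⟨X1, hX1sub, hX1ind, h1⟩ := h Finset.univ ⟨⟨0, by omega⟩, Finset.mem_univ _⟩
      (fun v _ => by norm_num)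
    obtain ⟨u, hu, hu1⟩ := exists_adj_pair hn hodd X1 hX1ind
    have hneu : u ≠ u + 1 := by
      intro hh
      have h10 : (1 : Fin n) = 0 := by
        have := add_left_cancel (a := u) (b := (1 : Fin n)) (c := 0) (by rw [add_zero, ← hh])
        exact this
      rw [Fin.one_eq_zero_iff] at h10
      omega
    have hcardc : k ≤ (Finset.univ \ ({u, u + 1} : Finset (Fin n))).card := by
      rw [Finset.card_sdiff_of_subset (Finset.subset_univ _), Finset.card_univ, Fintype.card_fin,
        Finset.card_insert_of_notMem (by simp [hneu]), Finset.card_singleton]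
      omega
    obtain ⟨S, hSsub, hScard⟩ := Finset.exists_subset_card_eq hcardc
    have huS : u ∉ S := fun hh => by simpa using hSsub hh
    have hu1S : u + 1 ∉ S := fun hh => by simpa using hSsub hh
    obtain ⟨X2, hX2sub, hX2ind, h2'⟩ := h1 Sᶜ ⟨u, by simp [Finset.mem_compl, huS]⟩
      (fun v _ => by simp [decMark])
    have hadj : (cycleGraph n).Adj u (u + 1) := cyc_adj_succ hn u
    have hvex : ∃ v', v' ∈ (Finset.univ \ X1) \ X2 ∧ v' ∉ S := by
      by_cases hu2 : u ∈ X2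
      · refine ⟨u + 1, ?_, hu1S⟩
        have hnm : u + 1 ∉ X2 := fun hh => hX2ind u hu2 (u + 1) hh hadj
        simp [Finset.mem_sdiff, hu1, hnm]
      · exact ⟨u, by simp [Finset.mem_sdiff, hu, hu2], huS⟩
    obtain ⟨v', hv'U, hv'S⟩ := hvex
    have hlen : S.toList.length = k := by rw [Finset.length_toList, hScard]
    refine lister_tail (cycleGraph n) S.toList S.nodup_toList
      (decMark (decMark (fun _ => 2) Finset.univ) Sᶜ) ((Finset.univ \ X1) \ X2) v'
      hv'U (by simpa using hv'S) ?_ ?_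
    · intro x
      by_cases hx : x ∈ S <;> simp [decMark, Finset.mem_toList, hx]
    · rw [hlen]
      exact h2'
  constructor
  · intro hnp
    by_contra hc
    exact hnp (hpaint hc)
  · rintro ⟨h2, hn'⟩
    exact hlister h2 hn'
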